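/- arXiv:1709.09867 — 3 statements merged into one kernel-verified Lean document; each statement's English description precedes it below -/
import Mathlib

section
/- Let G be a finite connected graph, α ≥ p > 1, and g,h:V→ℝ positive. Then there exist a function u:V→ℝ with u>0 on V and a constant λ>0 such that −Δ_p u + g u^{p−1} = λ h u^{α−1} on V and ∑_{x∈V} μ(x) h(x) u(x)^α = 1. -/
open Finset Filter Topology Pointwise

noncomputable def plap {V : Type} [Fintype V] (G : SimpleGraph V) [DecidableRel G.Adj]
    (μ : V → ℝ) (w : V → V → ℝ) (p : ℝ) (f : V → ℝ) (x : V) : ℝ :=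
  (μ x)⁻¹ * ∑ y ∈ G.neighborFinset x, w x y * (|f y - f x| ^ (p - 2) * (f y - f x))

noncomputable def Sgn (t : ℝ) : Set ℝ :=
  if t > 0 then {1} else if t < 0 then {-1} else Set.Icc (-1) 1

noncomputable def onelap {V : Type} [Fintype V] (G : SimpleGraph V) [DecidableRel G.Adj]
    (μ : V → ℝ) (w : V → V → ℝ) (u : V → ℝ) (x : V) : Set ℝ :=
  (μ x)⁻¹ • ∑ y ∈ G.neighborFinset x, w x y • Sgn (u y - u x)

noncomputable def pyPsi (q s : ℝ) : ℝ := |s| ^ (q - 2) * s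

lemma pyPsi_pos {q s : ℝ} (hs : 0 < s) : 0 < pyPsi q s :=
  mul_pos (Real.rpow_pos_of_pos (abs_pos.2 hs.ne') _) hs

lemma pyPsi_nonneg {q s : ℝ} (hs : 0 ≤ s) : 0 ≤ pyPsi q s := by
  rcases hs.eq_or_lt with rfl | hs
  · simp [pyPsi]
  · exact (pyPsi_pos hs).le

lemma pyPsi_affine {q : ℝ} (hq : 1 < q) (a d : ℝ) :
    HasDerivAt (fun t : ℝ => |a + t * d| ^ q) (q * pyPsi q a * d) 0 := by
  have h1 : HasDerivAt (fun t : ℝ => a + t * d) d 0 := by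
    simpa using ((hasDerivAt_id (0:ℝ)).mul_const d).const_add a
  have h2 := hasDerivAt_abs_rpow (a + 0 * d) hq
  have := h2.comp 0 h1
  simp only [zero_mul, add_zero] at this
  refine this.congr_deriv ?_
  simp only [pyPsi]; ring

noncomputable def pyFen {V : Type} [Fintype V] (G : SimpleGraph V) [DecidableRel G.Adj]
    (μ : V → ℝ) (w : V → V → ℝ) (g : V → ℝ) (p : ℝ) (u : V → ℝ) : ℝ :=
  (∑ x, ∑ y ∈ G.neighborFinset x, w x y * |u y - u x| ^ p)
    + 2 * ∑ x, μ x * g x * |u x| ^ p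

noncomputable def pyGcon {V : Type} [Fintype V] (μ h : V → ℝ) (α : ℝ) (u : V → ℝ) : ℝ :=
  ∑ x, μ x * h x * |u x| ^ α

lemma hasDerivAt_pyGcon {V : Type} [Fintype V] (μ h : V → ℝ) {α : ℝ} (hα : 1 < α)
    (u d : V → ℝ) :
    HasDerivAt (fun t => pyGcon μ h α (fun y => u y + t * d y))
      (∑ x, μ x * h x * (α * pyPsi α (u x) * d x)) 0 := by
  unfold pyGcon
  apply HasDerivAt.fun_sum
  intro x _
  exact (pyPsi_affine hα (u x) (d x)).const_mul (μ x * h x)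

lemma hasDerivAt_pyFen {V : Type} [Fintype V] (G : SimpleGraph V) [DecidableRel G.Adj]
    (μ : V → ℝ) (w : V → V → ℝ) (g : V → ℝ) {p : ℝ} (hp : 1 < p) (u d : V → ℝ) :
    HasDerivAt (fun t => pyFen G μ w g p (fun y => u y + t * d y))
      ((∑ x, ∑ y ∈ G.neighborFinset x, w x y * (p * pyPsi p (u y - u x) * (d y - d x)))
        + 2 * ∑ x, μ x * g x * (p * pyPsi p (u x) * d x)) 0 := by
  unfold pyFen
  apply HasDerivAt.add
  · apply HasDerivAt.fun_sum
    intro x _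
    apply HasDerivAt.fun_sum
    intro y _
    have heq : ∀ t : ℝ, u y + t * d y - (u x + t * d x) = (u y - u x) + t * (d y - d x) := by
      intro t; ring
    simp only [heq]
    exact (pyPsi_affine hp (u y - u x) (d y - d x)).const_mul (w x y)
  · exact (HasDerivAt.fun_sum (fun x _ =>
      (pyPsi_affine hp (u x) (d x)).const_mul (μ x * g x))).const_mul 2

lemma py_abs_rpow_mul {c : ℝ} (hc : 0 ≤ c) (s r : ℝ) : |c * s| ^ r = c ^ r * |s| ^ r := by
  rw [abs_mul, abs_of_nonneg hc, Real.mul_rpow hc (abs_nonneg s)]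

lemma pyGcon_smul {V : Type} [Fintype V] (μ h : V → ℝ) (α : ℝ) {c : ℝ} (hc : 0 ≤ c)
    (u : V → ℝ) : pyGcon μ h α (fun y => c * u y) = c ^ α * pyGcon μ h α u := by
  unfold pyGcon
  rw [Finset.mul_sum]
  exact Finset.sum_congr rfl fun x _ => by rw [py_abs_rpow_mul hc]; ring

lemma pyFen_smul {V : Type} [Fintype V] (G : SimpleGraph V) [DecidableRel G.Adj]
    (μ : V → ℝ) (w : V → V → ℝ) (g : V → ℝ) (p : ℝ) {c : ℝ} (hc : 0 ≤ c)
    (u : V → ℝ) : pyFen G μ w g p (fun y => c * u y) = c ^ p * pyFen G μ w g p u := by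
  unfold pyFen
  rw [mul_add, Finset.mul_sum, Finset.mul_sum]
  congr 1
  · exact Finset.sum_congr rfl fun x _ => by
      rw [Finset.mul_sum]
      exact Finset.sum_congr rfl fun y _ => by
        rw [← mul_sub, py_abs_rpow_mul hc]; ring
  · rw [Finset.mul_sum, Finset.mul_sum]
    exact Finset.sum_congr rfl fun x _ => by rw [py_abs_rpow_mul hc]; ring

noncomputable def pyDelta {V : Type} (z y : V) : ℝ :=
  Set.indicator {z} (fun _ => (1:ℝ)) y

lemma pyDelta_self {V : Type} (z : V) : pyDelta z z = 1 := by
  simp [pyDelta]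

lemma pyDelta_ne {V : Type} {z y : V} (h : y ≠ z) : pyDelta z y = 0 := by
  simp [pyDelta, Set.indicator_of_notMem h]; exact h

lemma pyPsi_neg (q s : ℝ) : pyPsi q (-s) = - pyPsi q s := by simp [pyPsi]

lemma py_edge_reindex {V : Type} [Fintype V] (G : SimpleGraph V) [DecidableRel G.Adj]
    (w : V → V → ℝ) (hsym : ∀ x y, G.Adj x y → w x y = w y x) (p : ℝ) (u : V → ℝ) (z : V) :
    (∑ x, ∑ y ∈ G.neighborFinset x,
        w x y * (p * pyPsi p (u y - u x) * (pyDelta z y - pyDelta z x)))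
      = -2 * p * ∑ y ∈ G.neighborFinset z, w z y * pyPsi p (u y - u z) := by
  have key : ∀ x y : V, w x y * (p * pyPsi p (u y - u x) * (pyDelta z y - pyDelta z x))
      = w x y * (p * pyPsi p (u y - u x)) * pyDelta z y
        - w x y * (p * pyPsi p (u y - u x)) * pyDelta z x := by intro x y; ring
  simp only [key, Finset.sum_sub_distrib]
  have hB : (∑ x, ∑ y ∈ G.neighborFinset x,
      w x y * (p * pyPsi p (u y - u x)) * pyDelta z x)
      = ∑ y ∈ G.neighborFinset z, w z y * (p * pyPsi p (u y - u z)) := by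
    rw [Finset.sum_eq_single_of_mem z (Finset.mem_univ z)]
    · exact Finset.sum_congr rfl fun y _ => by rw [pyDelta_self, mul_one]
    · intro x _ hx
      exact Finset.sum_eq_zero fun y _ => by rw [pyDelta_ne hx, mul_zero]
  have hA : (∑ x, ∑ y ∈ G.neighborFinset x,
      w x y * (p * pyPsi p (u y - u x)) * pyDelta z y)
      = ∑ x ∈ G.neighborFinset z, w x z * (p * pyPsi p (u z - u x)) := by
    rw [← Finset.sum_subset (Finset.subset_univ (G.neighborFinset z))]
    · exact Finset.sum_congr rfl fun x hx => by
        rw [Finset.sum_eq_single_of_mem z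
          (by rwa [SimpleGraph.mem_neighborFinset, SimpleGraph.adj_comm,
            ← SimpleGraph.mem_neighborFinset])
          (fun y _ hy => by rw [pyDelta_ne hy, mul_zero]), pyDelta_self, mul_one]
    · intro x _ hx
      refine Finset.sum_eq_zero fun y hy => ?_
      have : y ≠ z := by
        rintro rfl
        exact hx (by rwa [SimpleGraph.mem_neighborFinset, SimpleGraph.adj_comm,
          ← SimpleGraph.mem_neighborFinset] at hy)
      rw [pyDelta_ne this, mul_zero]
  rw [hA, hB]
  have hA' : (∑ x ∈ G.neighborFinset z, w x z * (p * pyPsi p (u z - u x)))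
      = ∑ x ∈ G.neighborFinset z, -(w z x * (p * pyPsi p (u x - u z))) := by
    refine Finset.sum_congr rfl fun x hx => ?_
    rw [SimpleGraph.mem_neighborFinset] at hx
    rw [hsym x z hx.symm, ← neg_sub (u x) (u z), pyPsi_neg]
    ring
  rw [hA', Finset.sum_neg_distrib]
  have hps : (∑ y ∈ G.neighborFinset z, w z y * (p * pyPsi p (u y - u z)))
      = p * ∑ y ∈ G.neighborFinset z, w z y * pyPsi p (u y - u z) := by
    rw [Finset.mul_sum]; exact Finset.sum_congr rfl fun y _ => by ring
  rw [hps]; ring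


lemma py_point_reindex {V : Type} [Fintype V] (c : V → ℝ) (r : ℝ) (u : V → ℝ) (z : V) :
    (∑ x, c x * (r * pyPsi r (u x) * pyDelta z x)) = c z * (r * pyPsi r (u z)) := by
  rw [Finset.sum_eq_single_of_mem z (Finset.mem_univ z)]
  · rw [pyDelta_self]; ring
  · intro x _ hx
    rw [pyDelta_ne hx]; ring

theorem p_yamabe_solvable {V : Type} [Fintype V] [Nonempty V]
    (G : SimpleGraph V) [DecidableRel G.Adj] (hconn : G.Connected)
    (μ : V → ℝ) (w : V → V → ℝ) (hμ : ∀ x, 0 < μ x)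
    (hw : ∀ x y, G.Adj x y → 0 < w x y) (hsym : ∀ x y, G.Adj x y → w x y = w y x)
    (p α : ℝ) (hp : 1 < p) (hpα : p ≤ α)
    (g h : V → ℝ) (hg : ∀ x, 0 < g x) (hh : ∀ x, 0 < h x) :
    ∃ (u : V → ℝ) (lam : ℝ), (∀ x, 0 < u x) ∧ 0 < lam ∧
      (∀ x, -(plap G μ w p u x) + g x * u x ^ (p - 1) = lam * h x * u x ^ (α - 1)) ∧
      ∑ x, μ x * h x * u x ^ α = 1 := by
  have hα : 1 < α := lt_of_lt_of_le hp hpα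
  have hα0 : α ≠ 0 := by positivity
  have hp0 : (0:ℝ) < p := by linarith
  set F := pyFen G μ w g p with hF
  set Gc := pyGcon μ h α with hGc
  -- continuity
  have habsCont : ∀ r : ℝ, 1 < r → Continuous (fun s : ℝ => |s| ^ r) := by
    intro r hr
    exact continuous_iff_continuousAt.2 fun s => (hasDerivAt_abs_rpow s hr).continuousAt
  have hGcont : Continuous Gc := by
    rw [hGc]; unfold pyGcon
    exact continuous_finset_sum _ fun x _ =>
      continuous_const.mul ((habsCont α hα).comp (continuous_apply x))
  have hFcont : Continuous F := by
    rw [hF]; unfold pyFen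
    apply Continuous.add
    · exact continuous_finset_sum _ fun x _ => continuous_finset_sum _ fun y _ =>
        continuous_const.mul ((habsCont p hp).comp
          ((continuous_apply y).sub (continuous_apply x)))
    · exact continuous_const.mul (continuous_finset_sum _ fun x _ =>
        continuous_const.mul ((habsCont p hp).comp (continuous_apply x)))
  -- the constraint set
  set S : Set (V → ℝ) := Gc ⁻¹' {1} with hS
  have hGterm_nonneg : ∀ (v : V → ℝ) (x : V), 0 ≤ μ x * h x * |v x| ^ α := fun v x => by
    have := (hμ x).le; have := (hh x).le; positivity
  have hScomp : IsCompact S := by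
    have hsub : S ⊆ Set.univ.pi fun x =>
        Set.Icc (-(((μ x * h x)⁻¹) ^ α⁻¹)) (((μ x * h x)⁻¹) ^ α⁻¹) := by
      intro v hv x _
      have hGv : Gc v = 1 := hv
      have hle1 : μ x * h x * |v x| ^ α ≤ 1 := by
        rw [← hGv, hGc]
        exact Finset.single_le_sum (fun i _ => hGterm_nonneg v i) (Finset.mem_univ x)
      have hμh : 0 < μ x * h x := mul_pos (hμ x) (hh x)
      have hle2 : |v x| ^ α ≤ (μ x * h x)⁻¹ := by
        rw [← mul_one (μ x * h x)⁻¹]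
        exact (le_inv_mul_iff₀ hμh).2 hle1
      have h3 : |v x| ≤ ((μ x * h x)⁻¹) ^ α⁻¹ := by
        have := Real.rpow_le_rpow (Real.rpow_nonneg (abs_nonneg _) α) hle2
          (inv_nonneg.2 (by linarith : (0:ℝ) ≤ α))
        rwa [← Real.rpow_mul (abs_nonneg _), mul_inv_cancel₀ hα0, Real.rpow_one] at this
      exact abs_le.1 h3
    exact IsCompact.of_isClosed_subset (isCompact_univ_pi fun x => isCompact_Icc)
      (isClosed_singleton.preimage hGcont) hsub
  have hSne : S.Nonempty := by
    set T : ℝ := ∑ x, μ x * h x with hT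
    have hTpos : 0 < T :=
      Finset.sum_pos (fun x _ => mul_pos (hμ x) (hh x)) Finset.univ_nonempty
    set c : ℝ := T ^ (-α⁻¹) with hc
    have hcpos : 0 < c := Real.rpow_pos_of_pos hTpos _
    refine ⟨fun _ => c, ?_⟩
    have hcα : c ^ α = T⁻¹ := by
      rw [hc, ← Real.rpow_mul hTpos.le, neg_mul, inv_mul_cancel₀ hα0, Real.rpow_neg_one]
    show Gc (fun _ => c) = 1
    rw [hGc]
    unfold pyGcon
    have : ∀ x : V, μ x * h x * |c| ^ α = μ x * h x * T⁻¹ := fun x => by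
      rw [abs_of_pos hcpos, hcα]
    simp only [this]
    rw [← Finset.sum_mul, ← hT, mul_inv_cancel₀ hTpos.ne']
  obtain ⟨u1, hu1S, hu1min⟩ := hScomp.exists_isMinOn hSne hFcont.continuousOn
  set u0 : V → ℝ := fun x => |u1 x| with hu0
  have hu0nn : ∀ x, 0 ≤ u0 x := fun x => abs_nonneg _
  have hu0S : Gc u0 = 1 := by
    have : Gc u0 = Gc u1 := by
      rw [hGc]; unfold pyGcon
      exact Finset.sum_congr rfl fun x _ => by rw [hu0, abs_abs]
    rw [this]; exact hu1S
  have hu0min : ∀ v, Gc v = 1 → F u0 ≤ F v := by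
    intro v hv
    have h1 : F u0 ≤ F u1 := by
      rw [hF]; unfold pyFen
      apply add_le_add
      · refine Finset.sum_le_sum fun x _ => Finset.sum_le_sum fun y hy => ?_
        have hwxy : 0 < w x y := hw x y ((SimpleGraph.mem_neighborFinset _ _ _).1 hy)
        refine mul_le_mul_of_nonneg_left ?_ hwxy.le
        refine Real.rpow_le_rpow (abs_nonneg _) ?_ hp0.le
        rw [hu0]
        exact abs_abs_sub_abs_le_abs_sub _ _
      · refine mul_le_mul_of_nonneg_left (le_of_eq ?_) (by norm_num)
        exact Finset.sum_congr rfl fun x _ => by rw [hu0, abs_abs]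
    exact h1.trans (hu1min hv)
  -- global quotient minimality
  have hglobal : ∀ v : V → ℝ, 0 < Gc v → F u0 * Gc v ^ (p / α) ≤ F v := by
    intro v hGv
    set c : ℝ := Gc v ^ (-α⁻¹) with hc
    have hcpos : 0 < c := Real.rpow_pos_of_pos hGv _
    have hcα : c ^ α = (Gc v)⁻¹ := by
      rw [hc, ← Real.rpow_mul hGv.le, neg_mul, inv_mul_cancel₀ hα0, Real.rpow_neg_one]
    have hc1 : Gc (fun y => c * v y) = 1 := by
      rw [hGc, pyGcon_smul _ _ _ hcpos.le, ← hGc, hcα, inv_mul_cancel₀ hGv.ne']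
    have h2 : F u0 ≤ c ^ p * F v := by
      have := hu0min (fun y => c * v y) hc1
      rwa [hF, pyFen_smul _ _ _ _ _ hcpos.le, ← hF] at this
    have hcp : c ^ p = Gc v ^ (-(p / α)) := by
      rw [hc, ← Real.rpow_mul hGv.le]
      congr 1
      field_simp
    have hpow : 0 < Gc v ^ (p / α) := Real.rpow_pos_of_pos hGv _
    have h3 := mul_le_mul_of_nonneg_right h2 hpow.le
    rwa [hcp, mul_assoc, mul_comm (F v), ← mul_assoc, ← Real.rpow_add hGv,
      neg_add_cancel, Real.rpow_zero, one_mul] at h3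
  -- some vertex is positive
  obtain ⟨x₀, hx₀⟩ : ∃ x, 0 < u0 x := by
    by_contra hcon
    push_neg at hcon
    have hz : ∀ x, u0 x = 0 := fun x => le_antisymm (hcon x) (hu0nn x)
    have : Gc u0 = 0 := by
      rw [hGc]; unfold pyGcon
      refine Finset.sum_eq_zero fun x _ => ?_
      rw [hz x, abs_zero, Real.zero_rpow hα0, mul_zero]
    rw [hu0S] at this; norm_num at this
  have hF0pos : 0 < F u0 := by
    rw [hF]; unfold pyFen
    have h1 : 0 ≤ ∑ x, ∑ y ∈ G.neighborFinset x, w x y * |u0 y - u0 x| ^ p :=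
      Finset.sum_nonneg fun x _ => Finset.sum_nonneg fun y hy =>
        mul_nonneg (hw x y ((SimpleGraph.mem_neighborFinset _ _ _).1 hy)).le
          (Real.rpow_nonneg (abs_nonneg _) _)
    have h2 : 0 < ∑ x, μ x * g x * |u0 x| ^ p := by
      refine Finset.sum_pos' (fun x _ => ?_) ⟨x₀, Finset.mem_univ x₀, ?_⟩
      · have := (hμ x).le; have := (hg x).le; positivity
      · have habs : 0 < |u0 x₀| := abs_pos.2 hx₀.ne'
        have := Real.rpow_pos_of_pos habs p
        have := hμ x₀; have := hg x₀; positivity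
    linarith
  -- Euler-Lagrange at each vertex
  have hEL : ∀ z : V, -(plap G μ w p u0 z) + g z * pyPsi p (u0 z)
      = (F u0 / 2) * h z * pyPsi α (u0 z) := by
    intro z
    set γ : ℝ → (V → ℝ) := fun t => fun y => u0 y + t * pyDelta z y with hγ
    have hγ0 : γ 0 = u0 := by funext y; simp [hγ]
    set DF : ℝ := (∑ x, ∑ y ∈ G.neighborFinset x,
        w x y * (p * pyPsi p (u0 y - u0 x) * (pyDelta z y - pyDelta z x)))
        + 2 * ∑ x, μ x * g x * (p * pyPsi p (u0 x) * pyDelta z x) with hDFdef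
    set DG : ℝ := ∑ x, μ x * h x * (α * pyPsi α (u0 x) * pyDelta z x) with hDGdef
    have hDF : HasDerivAt (fun t => F (γ t)) DF 0 := by
      rw [hF]; exact hasDerivAt_pyFen G μ w g hp u0 (pyDelta z)
    have hDG : HasDerivAt (fun t => Gc (γ t)) DG 0 := by
      rw [hGc]; exact hasDerivAt_pyGcon μ h hα u0 (pyDelta z)
    have hGγ0 : Gc (γ 0) = 1 := by rw [hγ0, hu0S]
    have hrpow : HasDerivAt (fun t => Gc (γ t) ^ (-(p / α)))
        (DG * (-(p / α)) * Gc (γ 0) ^ (-(p / α) - 1)) 0 :=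
      hDG.rpow_const (Or.inl (by rw [hGγ0]; norm_num))
    have hφ : HasDerivAt (fun t => F (γ t) * Gc (γ t) ^ (-(p / α)))
        (DF * Gc (γ 0) ^ (-(p / α)) + F (γ 0) * (DG * (-(p / α)) * Gc (γ 0) ^ (-(p / α) - 1)))
        0 := hDF.mul hrpow
    rw [hGγ0, hγ0, Real.one_rpow, Real.one_rpow, mul_one, mul_one] at hφ
    have hev : ∀ᶠ t in 𝓝 (0:ℝ), 0 < Gc (γ t) := by
      have hcont : ContinuousAt (fun t => Gc (γ t)) 0 := hDG.continuousAt
      have : Set.Ioi (0:ℝ) ∈ 𝓝 (Gc (γ 0)) := Ioi_mem_nhds (by rw [hGγ0]; norm_num)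
      exact hcont this
    have hmin : IsLocalMin (fun t => F (γ t) * Gc (γ t) ^ (-(p / α))) 0 := by
      filter_upwards [hev] with t ht
      have h1 := hglobal (γ t) ht
      have hpow : (0:ℝ) < Gc (γ t) ^ (p / α) := Real.rpow_pos_of_pos ht _
      have h2 := mul_le_mul_of_nonneg_right h1 (le_of_lt (Real.rpow_pos_of_pos ht (-(p / α))))
      calc F (γ 0) * Gc (γ 0) ^ (-(p / α)) = F u0 := by
            rw [hGγ0, hγ0, Real.one_rpow, mul_one]
        _ = F u0 * Gc (γ t) ^ (p / α) * Gc (γ t) ^ (-(p / α)) := by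
            rw [mul_assoc, ← Real.rpow_add ht, add_neg_cancel, Real.rpow_zero, mul_one]
        _ ≤ F (γ t) * Gc (γ t) ^ (-(p / α)) := h2
    have E0 : DF + F u0 * (DG * (-(p / α))) = 0 := hmin.hasDerivAt_eq_zero hφ
    -- reindex the sums
    set Sz : ℝ := ∑ y ∈ G.neighborFinset z, w z y * pyPsi p (u0 y - u0 z) with hSzdef
    have hedge : (∑ x, ∑ y ∈ G.neighborFinset x,
        w x y * (p * pyPsi p (u0 y - u0 x) * (pyDelta z y - pyDelta z x)))
        = -2 * p * Sz := py_edge_reindex G w hsym p u0 z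
    have hgpt : (∑ x, μ x * g x * (p * pyPsi p (u0 x) * pyDelta z x))
        = μ z * g z * (p * pyPsi p (u0 z)) := py_point_reindex (fun x => μ x * g x) p u0 z
    have hhpt : DG = μ z * h z * (α * pyPsi α (u0 z)) := by
      rw [hDGdef]; exact py_point_reindex (fun x => μ x * h x) α u0 z
    rw [hDFdef, hedge, hgpt, hhpt] at E0
    have hplap : plap G μ w p u0 z = (μ z)⁻¹ * Sz := by
      rw [hSzdef]; simp only [plap, pyPsi]
    rw [hplap]
    -- clear the α division
    have hdc : p / α * α = p := div_mul_cancel₀ p hα0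
    have E1 : -2 * p * Sz + 2 * (μ z * g z * (p * pyPsi p (u0 z)))
        = p * F u0 * (μ z * h z * pyPsi α (u0 z)) := by
      linear_combination E0 + F u0 * (μ z * h z * pyPsi α (u0 z)) * hdc
    have E2 : -2 * Sz + 2 * (μ z * g z * pyPsi p (u0 z))
        = F u0 * (μ z * h z * pyPsi α (u0 z)) :=
      mul_left_cancel₀ hp0.ne' (by linear_combination E1)
    have hinv : μ z * (μ z)⁻¹ = 1 := mul_inv_cancel₀ (hμ z).ne'
    exact mul_left_cancel₀ (hμ z).ne' (by linear_combination (1/2) * E2 - Sz * hinv)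
  -- positivity everywhere
  have hu0pos : ∀ x, 0 < u0 x := by
    have hprop : ∀ z y, u0 z = 0 → G.Adj z y → u0 y = 0 := by
      intro z y h0 hadj
      have hEz := hEL z
      rw [h0] at hEz
      have hψ0 : ∀ r : ℝ, pyPsi r 0 = 0 := fun r => by simp [pyPsi]
      simp only [hψ0, mul_zero, add_zero] at hEz
      have hplap0 : plap G μ w p u0 z = 0 := by linarith
      have hSz0 : (∑ y' ∈ G.neighborFinset z, w z y' * pyPsi p (u0 y')) = 0 := by
        have : plap G μ w p u0 z
            = (μ z)⁻¹ * ∑ y' ∈ G.neighborFinset z, w z y' * pyPsi p (u0 y') := by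
          simp only [plap, pyPsi, h0, sub_zero]
        rw [this] at hplap0
        rcases mul_eq_zero.1 hplap0 with h1 | h1
        · exact absurd h1 (inv_ne_zero (hμ z).ne')
        · exact h1
      have hterm : ∀ y' ∈ G.neighborFinset z, w z y' * pyPsi p (u0 y') = 0 := by
        rw [← Finset.sum_eq_zero_iff_of_nonneg]
        · exact hSz0
        · intro y' hy'
          exact mul_nonneg (hw z y' ((SimpleGraph.mem_neighborFinset _ _ _).1 hy')).le
            (pyPsi_nonneg (hu0nn y'))
      have hy : y ∈ G.neighborFinset z := (SimpleGraph.mem_neighborFinset _ _ _).2 hadj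
      have := hterm y hy
      rcases mul_eq_zero.1 this with h1 | h1
      · exact absurd h1 (hw z y hadj).ne'
      · by_contra hne
        have hpos : 0 < u0 y := lt_of_le_of_ne (hu0nn y) (Ne.symm hne)
        exact (pyPsi_pos hpos).ne' h1
    have hwalk : ∀ a b : V, G.Walk a b → u0 a = 0 → u0 b = 0 := by
      intro a b wk
      induction wk with
      | nil => exact id
      | cons hadj _ ih => exact fun h0 => ih (hprop _ _ h0 hadj)
    intro x
    rcases (hu0nn x).eq_or_lt with h0 | h0
    · exfalso
      obtain ⟨wk⟩ := hconn x x₀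
      exact hx₀.ne' (hwalk x x₀ wk h0.symm)
    · exact h0
  -- conclude
  refine ⟨u0, F u0 / 2, hu0pos, by positivity, fun z => ?_, ?_⟩
  · have := hEL z
    rwa [pyPsi, pyPsi, abs_of_pos (hu0pos z),
      ← Real.rpow_add_one (hu0pos z).ne', show p - 2 + 1 = p - 1 by ring,
      ← Real.rpow_add_one (hu0pos z).ne', show α - 2 + 1 = α - 1 by ring] at this
  · rw [← hu0S, hGc]; unfold pyGcon
    exact (Finset.sum_congr rfl fun x _ => by rw [abs_of_pos (hu0pos x)]).symm
end

section
/- Let G be a finite connected graph, α>1, g,h>0 on V. There exist positive constants c₂ ≤ 1 ≤ c₁ depending only on α, g, h, and G (including μ, w) such that for every p∈(1,α), if u>0 solves −Δ_p u + g u^{p−1} = λ h u^{α−1} with λ>0 and ∑_x μ(x)h(x)u(x)^α = 1, then c₂ ≤ λ ≤ c₁. -/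
open Finset Filter Topology Pointwise

/-- The weighted sum of the p-Laplacian over all vertices vanishes, by antisymmetry. -/
lemma plap_sum_zero {V : Type} [Fintype V] (G : SimpleGraph V) [DecidableRel G.Adj]
    (μ : V → ℝ) (w : V → V → ℝ) (hμ : ∀ x, 0 < μ x)
    (hsym : ∀ x y, G.Adj x y → w x y = w y x) (p : ℝ) (u : V → ℝ) :
    ∑ x, μ x * plap G μ w p u x = 0 := by
  classical
  have h1 : ∀ x, μ x * plap G μ w p u x
      = ∑ y, if G.Adj x y then w x y * (|u y - u x| ^ (p - 2) * (u y - u x)) else 0 := by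
    intro x
    rw [plap, ← mul_assoc, mul_inv_cancel₀ (hμ x).ne', one_mul]
    have hset : G.neighborFinset x = Finset.univ.filter (G.Adj x) := by
      ext y; simp [SimpleGraph.mem_neighborFinset]
    rw [hset, Finset.sum_filter]
  simp only [h1]
  set t : V → V → ℝ :=
    fun x y => if G.Adj x y then w x y * (|u y - u x| ^ (p - 2) * (u y - u x)) else 0 with ht
  have hanti : ∀ x y, t y x = - t x y := by
    intro x y
    by_cases hxy : G.Adj x y
    · simp only [ht, if_pos hxy, if_pos hxy.symm]
      rw [hsym y x hxy.symm, abs_sub_comm (u x) (u y)]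
      ring
    · have hyx : ¬ G.Adj y x := fun hc => hxy hc.symm
      simp only [ht, if_neg hxy, if_neg hyx, neg_zero]
  have hT : (∑ x, ∑ y, t x y) = - ∑ x, ∑ y, t x y := by
    calc ∑ x, ∑ y, t x y = ∑ y, ∑ x, t x y := Finset.sum_comm
      _ = ∑ y, ∑ x, - t y x := by
          refine Finset.sum_congr rfl fun y _ => Finset.sum_congr rfl fun x _ => ?_
          rw [hanti y x]
      _ = - ∑ y, ∑ x, t y x := by simp
  linarith

theorem lambda_uniform_bounds {V : Type} [Fintype V] [Nonempty V]
    (G : SimpleGraph V) [DecidableRel G.Adj] (hconn : G.Connected)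
    (μ : V → ℝ) (w : V → V → ℝ) (hμ : ∀ x, 0 < μ x)
    (hw : ∀ x y, G.Adj x y → 0 < w x y) (hsym : ∀ x y, G.Adj x y → w x y = w y x)
    (α : ℝ) (hα : 1 < α) (g h : V → ℝ) (hg : ∀ x, 0 < g x) (hh : ∀ x, 0 < h x) :
    ∃ c₁ c₂ : ℝ, 0 < c₂ ∧ c₂ ≤ 1 ∧ 1 ≤ c₁ ∧
      ∀ (p : ℝ), 1 < p → p < α → ∀ (lam : ℝ) (u : V → ℝ), (∀ x, 0 < u x) → 0 < lam →
        (∀ x, -(plap G μ w p u x) + g x * u x ^ (p - 1) = lam * h x * u x ^ (α - 1)) →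
        (∑ x, μ x * h x * u x ^ α = 1) →
        c₂ ≤ lam ∧ lam ≤ c₁ := by
  classical
  obtain ⟨xg, -, hxg⟩ := Finset.exists_min_image Finset.univ (fun x => μ x * g x)
    ⟨Classical.arbitrary V, Finset.mem_univ _⟩
  obtain ⟨xh, -, hxh⟩ := Finset.exists_min_image Finset.univ (fun x => μ x * h x)
    ⟨Classical.arbitrary V, Finset.mem_univ _⟩
  set S : ℝ := ∑ x, μ x * h x with hSdef
  have hS : 0 < S := Finset.sum_pos (fun x _ => mul_pos (hμ x) (hh x)) Finset.univ_nonempty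
  set Bc : ℝ := 1 + ∑ x, (μ x * h x)⁻¹ with hBdef
  have hB1 : (1 : ℝ) ≤ Bc := by
    have : (0:ℝ) ≤ ∑ x, (μ x * h x)⁻¹ :=
      Finset.sum_nonneg fun x _ => (inv_pos.2 (mul_pos (hμ x) (hh x))).le
    simp only [hBdef]; linarith
  have hB0 : (0 : ℝ) < Bc := lt_of_lt_of_le one_pos hB1
  set m : ℝ := min 1 S⁻¹ with hmdef
  have hm0 : (0 : ℝ) < m := lt_min one_pos (inv_pos.2 hS)
  have hm1 : m ≤ 1 := min_le_left _ _
  set Sg : ℝ := ∑ x, μ x * g x with hSgdef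
  have hSg : 0 < Sg := Finset.sum_pos (fun x _ => mul_pos (hμ x) (hg x)) Finset.univ_nonempty
  have hmg : 0 < μ xg * g xg := mul_pos (hμ xg) (hg xg)
  have hmh : 0 < μ xh * h xh := mul_pos (hμ xh) (hh xh)
  have hmpow : (0:ℝ) < m ^ (α - 1) := Real.rpow_pos_of_pos hm0 _
  have hBpow : (0:ℝ) < Bc ^ (α - 1) := Real.rpow_pos_of_pos hB0 _
  set A0 : ℝ := μ xg * g xg * m ^ (α - 1) with hA0def
  set D0 : ℝ := μ xh * h xh * m ^ (α - 1) with hD0def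
  set N1 : ℝ := Sg * Bc ^ (α - 1) with hN1def
  set D1 : ℝ := S * Bc ^ (α - 1) with hD1def
  have hA0 : 0 < A0 := mul_pos hmg hmpow
  have hD0 : 0 < D0 := mul_pos hmh hmpow
  have hD1 : 0 < D1 := mul_pos hS hBpow
  have hN1 : 0 < N1 := mul_pos hSg hBpow
  refine ⟨max 1 (N1 / D0), min 1 (A0 / D1), lt_min one_pos (div_pos hA0 hD1),
    min_le_left _ _, le_max_left _ _, ?_⟩
  intro p hp hpα lam u hu hlam heq hnorm
  -- pointwise upper bound on u
  have hub : ∀ x, u x ≤ Bc := by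
    intro x
    have hterm : μ x * h x * u x ^ α ≤ 1 := by
      rw [← hnorm]
      exact Finset.single_le_sum
        (fun z _ => mul_nonneg (mul_pos (hμ z) (hh z)).le (Real.rpow_pos_of_pos (hu z) _).le)
        (Finset.mem_univ x)
    have h2 : u x ^ α ≤ (μ x * h x)⁻¹ := by
      have hpos := mul_pos (hμ x) (hh x)
      rw [← one_div, le_div_iff₀ hpos, mul_comm]
      exact hterm
    by_cases hx1 : u x ≤ 1
    · linarith
    · push_neg at hx1
      have h3 : u x = u x ^ (1:ℝ) := (Real.rpow_one _).symm
      have h4 : u x ^ (1:ℝ) ≤ u x ^ α := Real.rpow_le_rpow_of_exponent_le hx1.le hα.le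
      have h5 : (μ x * h x)⁻¹ ≤ Bc := by
        have : (μ x * h x)⁻¹ ≤ ∑ z, (μ z * h z)⁻¹ :=
          Finset.single_le_sum (fun z _ => (inv_pos.2 (mul_pos (hμ z) (hh z))).le)
            (Finset.mem_univ x)
        simp only [hBdef]; linarith
      calc u x = u x ^ (1:ℝ) := h3
        _ ≤ u x ^ α := h4
        _ ≤ (μ x * h x)⁻¹ := h2
        _ ≤ Bc := h5
  -- max point of u is at least m
  obtain ⟨xs, -, hxs⟩ := Finset.exists_max_image Finset.univ u
    ⟨Classical.arbitrary V, Finset.mem_univ _⟩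
  have hxsm : m ≤ u xs := by
    have h1 : (1:ℝ) ≤ S * u xs ^ α := by
      rw [← hnorm, hSdef, Finset.sum_mul]
      refine Finset.sum_le_sum fun x _ => ?_
      exact mul_le_mul_of_nonneg_left
        (Real.rpow_le_rpow (hu x).le (hxs x (Finset.mem_univ x))
          (by linarith : (0:ℝ) ≤ α)) (mul_pos (hμ x) (hh x)).le
    have h2 : S⁻¹ ≤ u xs ^ α := by
      rw [← one_div, div_le_iff₀ hS, mul_comm]
      exact h1
    by_cases hx1 : 1 ≤ u xs
    · exact le_trans hm1 hx1
    · push_neg at hx1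
      have h3 : u xs ^ α ≤ u xs ^ (1:ℝ) :=
        Real.rpow_le_rpow_of_exponent_ge (hu xs) hx1.le hα.le
      rw [Real.rpow_one] at h3
      exact le_trans (min_le_right _ _) (le_trans h2 h3)
  -- sum identity
  set A : ℝ := ∑ x, μ x * (g x * u x ^ (p - 1)) with hAdef
  set D : ℝ := ∑ x, μ x * (h x * u x ^ (α - 1)) with hDdef
  have hAD : A = lam * D := by
    have e1 : ∀ x, μ x * (g x * u x ^ (p - 1))
        = μ x * plap G μ w p u x + lam * (μ x * (h x * u x ^ (α - 1))) := by
      intro x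
      linear_combination μ x * heq x
    calc A = ∑ x, (μ x * plap G μ w p u x + lam * (μ x * (h x * u x ^ (α - 1)))) :=
          Finset.sum_congr rfl fun x _ => e1 x
      _ = (∑ x, μ x * plap G μ w p u x) + ∑ x, lam * (μ x * (h x * u x ^ (α - 1))) :=
          Finset.sum_add_distrib
      _ = lam * D := by
          rw [plap_sum_zero G μ w hμ hsym p u, zero_add, hDdef, Finset.mul_sum]
  -- bounds on A and D
  have hmp : m ^ (α - 1) ≤ u xs ^ (p - 1) := by
    calc m ^ (α - 1) ≤ m ^ (p - 1) :=
          Real.rpow_le_rpow_of_exponent_ge hm0 hm1 (by linarith)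
      _ ≤ u xs ^ (p - 1) := Real.rpow_le_rpow hm0.le hxsm (by linarith)
  have hmpα : m ^ (α - 1) ≤ u xs ^ (α - 1) :=
    Real.rpow_le_rpow hm0.le hxsm (by linarith)
  have hApos : ∀ x, (0:ℝ) ≤ μ x * (g x * u x ^ (p - 1)) :=
    fun x => mul_nonneg (hμ x).le (mul_nonneg (hg x).le (Real.rpow_pos_of_pos (hu x) _).le)
  have hDpos : ∀ x, (0:ℝ) ≤ μ x * (h x * u x ^ (α - 1)) :=
    fun x => mul_nonneg (hμ x).le (mul_nonneg (hh x).le (Real.rpow_pos_of_pos (hu x) _).le)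
  have hAlow : A0 ≤ A := by
    have h1 : μ xs * (g xs * u xs ^ (p - 1)) ≤ A :=
      Finset.single_le_sum (fun x _ => hApos x) (Finset.mem_univ xs)
    have h2 : A0 ≤ μ xs * (g xs * u xs ^ (p - 1)) := by
      rw [hA0def, ← mul_assoc]
      exact mul_le_mul (hxg xs (Finset.mem_univ xs)) hmp hmpow.le
        (mul_pos (hμ xs) (hg xs)).le
    linarith
  have hDlow : D0 ≤ D := by
    have h1 : μ xs * (h xs * u xs ^ (α - 1)) ≤ D :=
      Finset.single_le_sum (fun x _ => hDpos x) (Finset.mem_univ xs)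
    have h2 : D0 ≤ μ xs * (h xs * u xs ^ (α - 1)) := by
      rw [hD0def, ← mul_assoc]
      exact mul_le_mul (hxh xs (Finset.mem_univ xs)) hmpα hmpow.le
        (mul_pos (hμ xs) (hh xs)).le
    linarith
  have hBup : ∀ x (q : ℝ), 0 ≤ q → q ≤ α - 1 → u x ^ q ≤ Bc ^ (α - 1) := by
    intro x q hq0 hqα
    calc u x ^ q ≤ Bc ^ q := Real.rpow_le_rpow (hu x).le (hub x) hq0
      _ ≤ Bc ^ (α - 1) := Real.rpow_le_rpow_of_exponent_le hB1 hqα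
  have hAup : A ≤ N1 := by
    rw [hN1def, hSgdef, Finset.sum_mul]
    refine Finset.sum_le_sum fun x _ => ?_
    rw [mul_assoc]
    exact mul_le_mul_of_nonneg_left
      (mul_le_mul_of_nonneg_left (hBup x (p-1) (by linarith) (by linarith)) (hg x).le) (hμ x).le
  have hDup : D ≤ D1 := by
    rw [hD1def, hSdef, Finset.sum_mul]
    refine Finset.sum_le_sum fun x _ => ?_
    rw [mul_assoc]
    exact mul_le_mul_of_nonneg_left
      (mul_le_mul_of_nonneg_left (hBup x (α-1) (by linarith) (by linarith)) (hh x).le) (hμ x).le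
  constructor
  · refine le_trans (min_le_right _ _) ?_
    rw [div_le_iff₀ hD1]
    calc A0 ≤ A := hAlow
      _ = lam * D := hAD
      _ ≤ lam * D1 := mul_le_mul_of_nonneg_left hDup hlam.le
  · refine le_trans ?_ (le_max_right _ _)
    rw [le_div_iff₀ hD0]
    calc lam * D0 ≤ lam * D := mul_le_mul_of_nonneg_left hDlow hlam.le
      _ = A := hAD.symm
      _ ≤ N1 := hAup
end

section
/- Let G=(V,E) be a finite connected graph, α>1, and g,h:V→ℝ positive. Then the 1-Yamabe equation Δ₁u + g·Sgn(u) ∋ h|u|^{α−1}·Sgn(u) has a nontrivial solution u ≥ 0, u ≢ 0. That is, there exists u:V→[0,∞), not identically zero, such that for every x∈V the sets A⁺(x) = −Δ₁u(x) + g(x)Sgn(u(x)) and A⁻(x) = h(x)|u(x)|^{α−1}Sgn(u(x)) have nonempty intersection. -/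
open Finset Filter Topology Pointwise

private lemma Sgn_of_pos {t : ℝ} (ht : 0 < t) : Sgn t = {1} := if_pos ht

private lemma Sgn_of_neg {t : ℝ} (ht : t < 0) : Sgn t = {-1} := by
  unfold Sgn; rw [if_neg (by linarith), if_pos ht]

private lemma Sgn_of_zero : Sgn 0 = Set.Icc (-1) 1 := by unfold Sgn; norm_num

private lemma mem_sum_sets {ι : Type*} (s : Finset ι) (f : ι → Set ℝ) (c : ι → ℝ)
    (hc : ∀ i ∈ s, c i ∈ f i) : (∑ i ∈ s, c i) ∈ ∑ i ∈ s, f i := by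
  classical
  induction s using Finset.induction with
  | empty => simp
  | insert a s hx ih =>
    rw [Finset.sum_insert hx, Finset.sum_insert hx]
    exact Set.add_mem_add (hc _ (Finset.mem_insert_self _ _))
      (ih fun i hi => hc i (Finset.mem_insert_of_mem hi))

private lemma abs_perturb {p q σ ε : ℝ} (hσ : σ = 1 ∨ σ = -1) (hε : 0 ≤ ε)
    (hgap : 0 < σ * (p - q) → ε ≤ σ * (p - q)) :
    |p - (q + ε * σ)| ≤ |p - q| + ε * (if 0 < σ * (p - q) then -1 else 1) := by
  have h1 := abs_cases (p - q)
  have h2 := abs_cases (p - (q + ε * σ))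
  rcases hσ with rfl | rfl <;> split_ifs with hc <;>
    rcases h1 with ⟨e1, f1⟩ | ⟨e1, f1⟩ <;> rcases h2 with ⟨e2, f2⟩ | ⟨e2, f2⟩ <;>
    rw [e1, e2] <;> first
      | linarith [hgap hc]
      | linarith

private noncomputable def NN {V : Type} [Fintype V] (μ h : V → ℝ) (α : ℝ) (u : V → ℝ) : ℝ :=
  ∑ x, μ x * h x * u x ^ α

private noncomputable def JJ {V : Type} [Fintype V] (G : SimpleGraph V) [DecidableRel G.Adj]
    (μ : V → ℝ) (w : V → V → ℝ) (g : V → ℝ) (u : V → ℝ) : ℝ :=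
  (∑ z, ∑ y ∈ G.neighborFinset z, w z y * |u y - u z|) + 2 * ∑ z, g z * μ z * u z

private lemma core {V : Type} [Fintype V] (G : SimpleGraph V) [DecidableRel G.Adj]
    (μ : V → ℝ) (w : V → V → ℝ) (g h : V → ℝ)
    (hw : ∀ x y, G.Adj x y → 0 ≤ w x y)
    (hsym : ∀ x y, G.Adj x y → w x y = w y x)
    (α : ℝ) (hα : 1 < α) (m : V → ℝ) (hm0 : ∀ x, 0 ≤ m x)
    (hmN : NN μ h α m = 1)
    (hkey : ∀ v : V → ℝ, (∀ x, 0 ≤ v x) →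
      JJ G μ w g m * NN μ h α v ^ α⁻¹ ≤ JJ G μ w g v)
    (x : V) (σ : ℝ) (hσ : σ = 1 ∨ σ = -1) (hσx : σ = -1 → 0 < m x) :
    JJ G μ w g m * (μ x * h x * m x ^ (α - 1) * σ) ≤
      2 * ((∑ y ∈ G.neighborFinset x, w x y * (if 0 < σ * (m y - m x) then (-1:ℝ) else 1))
        + σ * (g x * μ x)) := by
  classical
  have hα0 : (0:ℝ) < α := lt_trans one_pos hα
  set cc : V → ℝ := fun y => if 0 < σ * (m y - m x) then (-1:ℝ) else 1 with hcc
  set A : ℝ := ∑ y ∈ G.neighborFinset x, w x y * cc y with hA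
  set R : ℝ := ∑ z ∈ Finset.univ.erase x, μ z * h z * m z ^ α with hR
  set φ : ℝ → ℝ := fun ε => JJ G μ w g m * (μ x * h x * (m x + ε * σ) ^ α + R) ^ α⁻¹ with hφ
  set vv : ℝ → V → ℝ := fun ε z => if z = x then m x + ε * σ else m z with hvv
  have hone : μ x * h x * m x ^ α + R = 1 := by
    rw [hR, ← hmN, NN,
      Finset.add_sum_erase _ (fun z => μ z * h z * m z ^ α) (Finset.mem_univ x)]
  have hNvv : ∀ ε, NN μ h α (vv ε) = μ x * h x * (m x + ε * σ) ^ α + R := by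
    intro ε
    rw [NN, ← Finset.add_sum_erase _ (fun z => μ z * h z * vv ε z ^ α) (Finset.mem_univ x)]
    congr 1
    · simp [hvv]
    · exact Finset.sum_congr rfl fun z hz => by
        simp [hvv, (Finset.mem_erase.1 hz).1]
  have hDer : HasDerivAt φ (JJ G μ w g m * (μ x * h x * m x ^ (α - 1) * σ)) 0 := by
    have l1 : HasDerivAt (fun ε : ℝ => m x + ε * σ) σ 0 := by
      simpa using ((hasDerivAt_id (0:ℝ)).mul_const σ).const_add (m x)
    have l2 : HasDerivAt (fun ε : ℝ => (m x + ε * σ) ^ α) (σ * α * m x ^ (α - 1)) 0 := by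
      have := l1.rpow_const (p := α) (Or.inr hα.le)
      simpa using this
    have l3 : HasDerivAt (fun ε : ℝ => μ x * h x * (m x + ε * σ) ^ α + R)
        (μ x * h x * (σ * α * m x ^ (α - 1))) 0 := (l2.const_mul (μ x * h x)).add_const R
    have key0 : (fun ε : ℝ => μ x * h x * (m x + ε * σ) ^ α + R) 0 ≠ 0 := by
      show μ x * h x * (m x + 0 * σ) ^ α + R ≠ 0
      rw [zero_mul, add_zero, hone]; exact one_ne_zero
    have l4 := l3.rpow_const (p := α⁻¹) (Or.inl key0)
    have key1 : μ x * h x * (m x + 0 * σ) ^ α + R = 1 := by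
      rw [zero_mul, add_zero, hone]
    rw [key1, Real.one_rpow, mul_one] at l4
    have l5 := l4.const_mul (JJ G μ w g m)
    have : JJ G μ w g m * (μ x * h x * (σ * α * m x ^ (α - 1)) * α⁻¹)
        = JJ G μ w g m * (μ x * h x * m x ^ (α - 1) * σ) := by
      field_simp
    rw [this] at l5
    exact l5
  have hev1 : ∀ y ∈ G.neighborFinset x, ∀ᶠ ε in 𝓝[>] (0:ℝ),
      |m y - (m x + ε * σ)| ≤ |m y - m x| + ε * cc y := by
    intro y _
    by_cases hcy : 0 < σ * (m y - m x)
    · filter_upwards [Ioo_mem_nhdsGT_of_mem (Set.mem_Ico.2 ⟨le_refl (0:ℝ), hcy⟩)] with ε hε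
      have := abs_perturb (p := m y) (q := m x) hσ (le_of_lt hε.1) (fun _ => le_of_lt hε.2)
      simpa only [hcc] using this
    · filter_upwards [self_mem_nhdsWithin] with ε hε
      have := abs_perturb (p := m y) (q := m x) hσ (le_of_lt hε) (fun hcon => absurd hcon hcy)
      simpa only [hcc] using this
  have hevnn : ∀ᶠ ε in 𝓝[>] (0:ℝ), ∀ z, 0 ≤ vv ε z := by
    rcases hσ with hσ1 | hσ1
    · filter_upwards [self_mem_nhdsWithin] with ε hε z
      have hε' : (0:ℝ) < ε := hε
      simp only [hvv]
      split_ifs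
      · rw [hσ1]; nlinarith [hm0 x]
      · exact hm0 z
    · have hx0 : 0 < m x := hσx hσ1
      filter_upwards [Ioo_mem_nhdsGT_of_mem (Set.mem_Ico.2 ⟨le_refl (0:ℝ), hx0⟩)] with ε hε z
      simp only [hvv]
      split_ifs
      · rw [hσ1]; nlinarith [hε.2]
      · exact hm0 z
  have hwnn : ∀ z y, y ∈ G.neighborFinset z → 0 ≤ w z y := fun z y hy =>
    hw z y ((SimpleGraph.mem_neighborFinset _ _ _).1 hy)
  have hEv : ∀ᶠ ε in 𝓝[>] (0:ℝ), φ ε ≤ JJ G μ w g m + ε * (2 * (A + σ * (g x * μ x))) := by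
    filter_upwards [(G.neighborFinset x).eventually_all.2 hev1, hevnn, self_mem_nhdsWithin]
      with ε hev hnn hεpos
    have hε : (0:ℝ) < ε := hεpos
    have step1 : φ ε ≤ JJ G μ w g (vv ε) := by
      have hk := hkey (vv ε) hnn
      rw [hNvv ε] at hk
      exact hk
    refine step1.trans ?_
    have hlin : ∑ z, g z * μ z * vv ε z = (∑ z, g z * μ z * m z) + ε * σ * (g x * μ x) := by
      rw [← Finset.add_sum_erase _ (fun z => g z * μ z * vv ε z) (Finset.mem_univ x),
          ← Finset.add_sum_erase _ (fun z => g z * μ z * m z) (Finset.mem_univ x)]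
      have he : ∑ z ∈ Finset.univ.erase x, g z * μ z * vv ε z
          = ∑ z ∈ Finset.univ.erase x, g z * μ z * m z :=
        Finset.sum_congr rfl fun z hz => by simp [hvv, (Finset.mem_erase.1 hz).1]
      rw [he]
      simp only [hvv, if_pos rfl]
      ring
    have hedgeX : ∑ y ∈ G.neighborFinset x, w x y * |vv ε y - vv ε x|
        ≤ (∑ y ∈ G.neighborFinset x, w x y * |m y - m x|) + ε * A := by
      rw [hA, Finset.mul_sum, ← Finset.sum_add_distrib]
      refine Finset.sum_le_sum fun y hy => ?_
      have hyx : y ≠ x := ((SimpleGraph.mem_neighborFinset _ _ _).1 hy).ne'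
      have h1 : vv ε y = m y := by simp [hvv, hyx]
      have h2 : vv ε x = m x + ε * σ := by simp [hvv]
      rw [h1, h2]
      calc w x y * |m y - (m x + ε * σ)| ≤ w x y * (|m y - m x| + ε * cc y) :=
            mul_le_mul_of_nonneg_left (hev y hy) (hwnn x y hy)
        _ = w x y * |m y - m x| + ε * (w x y * cc y) := by ring
    have hedgeZ : ∀ z ∈ Finset.univ.erase x,
        ∑ y ∈ G.neighborFinset z, w z y * |vv ε y - vv ε z|
        ≤ (∑ y ∈ G.neighborFinset z, w z y * |m y - m z|)
          + ε * (if x ∈ G.neighborFinset z then w z x * cc z else 0) := by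
      intro z hz
      have hzx : z ≠ x := (Finset.mem_erase.1 hz).1
      have h2 : vv ε z = m z := by simp [hvv, hzx]
      have hsum : ∑ y ∈ G.neighborFinset z, w z y * |vv ε y - vv ε z|
          ≤ ∑ y ∈ G.neighborFinset z,
            (w z y * |m y - m z| + ε * (if y = x then w z y * cc z else 0)) := by
        refine Finset.sum_le_sum fun y hy => ?_
        by_cases hyx : y = x
        · subst hyx
          have h1 : vv ε y = m y + ε * σ := by simp [hvv]
          rw [h1, h2, if_pos rfl]
          have hzy : z ∈ G.neighborFinset y :=
            (SimpleGraph.mem_neighborFinset _ _ _).2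
              (((SimpleGraph.mem_neighborFinset _ _ _).1 hy).symm)
          have hb := hev z hzy
          have habs : |m y + ε * σ - m z| ≤ |m y - m z| + ε * cc z := by
            rw [abs_sub_comm (m y + ε * σ) (m z), abs_sub_comm (m y) (m z)]
            calc |m z - (m y + ε * σ)| ≤ |m z - m y| + ε * cc z := hb
              _ = |m z - m y| + ε * cc z := rfl
          calc w z y * |m y + ε * σ - m z| ≤ w z y * (|m y - m z| + ε * cc z) :=
                mul_le_mul_of_nonneg_left habs (hwnn z y hy)
            _ = w z y * |m y - m z| + ε * (w z y * cc z) := by ring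
        · have h1 : vv ε y = m y := by simp [hvv, hyx]
          rw [h1, h2, if_neg hyx, mul_zero, add_zero]
      have hcol : ∑ y ∈ G.neighborFinset z, (if y = x then w z y * cc z else 0)
          = (if x ∈ G.neighborFinset z then w z x * cc z else 0) :=
        Finset.sum_ite_eq' _ _ _
      calc ∑ y ∈ G.neighborFinset z, w z y * |vv ε y - vv ε z|
          ≤ ∑ y ∈ G.neighborFinset z,
              (w z y * |m y - m z| + ε * (if y = x then w z y * cc z else 0)) := hsum
        _ = (∑ y ∈ G.neighborFinset z, w z y * |m y - m z|)
              + ε * ∑ y ∈ G.neighborFinset z, (if y = x then w z y * cc z else 0) := by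
            rw [Finset.sum_add_distrib, Finset.mul_sum]
        _ = (∑ y ∈ G.neighborFinset z, w z y * |m y - m z|)
              + ε * (if x ∈ G.neighborFinset z then w z x * cc z else 0) := by rw [hcol]
    have hBsum : ∑ z ∈ Finset.univ.erase x,
        (if x ∈ G.neighborFinset z then w z x * cc z else 0) = A := by
      rw [Finset.sum_erase _ (by simp)]
      have hcv : ∀ z, (if x ∈ G.neighborFinset z then w z x * cc z else 0)
          = (if z ∈ G.neighborFinset x then w x z * cc z else 0) := by
        intro z
        by_cases hzz : z ∈ G.neighborFinset x
        · have hadj : G.Adj x z := (SimpleGraph.mem_neighborFinset _ _ _).1 hzz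
          rw [if_pos ((SimpleGraph.mem_neighborFinset _ _ _).2 hadj.symm), if_pos hzz,
            hsym x z hadj]
        · rw [if_neg (fun hc => hzz ((SimpleGraph.mem_neighborFinset _ _ _).2
            (((SimpleGraph.mem_neighborFinset _ _ _).1 hc).symm))), if_neg hzz]
      rw [Finset.sum_congr rfl (fun z _ => hcv z), Finset.sum_ite_mem, Finset.univ_inter, hA]
    have hedge : ∑ z, ∑ y ∈ G.neighborFinset z, w z y * |vv ε y - vv ε z|
        ≤ (∑ z, ∑ y ∈ G.neighborFinset z, w z y * |m y - m z|) + ε * (2 * A) := by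
      rw [← Finset.add_sum_erase _
            (fun z => ∑ y ∈ G.neighborFinset z, w z y * |vv ε y - vv ε z|) (Finset.mem_univ x),
          ← Finset.add_sum_erase _
            (fun z => ∑ y ∈ G.neighborFinset z, w z y * |m y - m z|) (Finset.mem_univ x)]
      have hrest : ∑ z ∈ Finset.univ.erase x,
            (∑ y ∈ G.neighborFinset z, w z y * |vv ε y - vv ε z|)
          ≤ ∑ z ∈ Finset.univ.erase x, ((∑ y ∈ G.neighborFinset z, w z y * |m y - m z|)
              + ε * (if x ∈ G.neighborFinset z then w z x * cc z else 0)) :=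
        Finset.sum_le_sum hedgeZ
      rw [Finset.sum_add_distrib, ← Finset.mul_sum, hBsum] at hrest
      linarith [hedgeX]
    have hJJvv : JJ G μ w g (vv ε)
        = (∑ z, ∑ y ∈ G.neighborFinset z, w z y * |vv ε y - vv ε z|)
          + 2 * ∑ z, g z * μ z * vv ε z := rfl
    have hJJm : JJ G μ w g m
        = (∑ z, ∑ y ∈ G.neighborFinset z, w z y * |m y - m z|)
          + 2 * ∑ z, g z * μ z * m z := rfl
    rw [hJJvv, hJJm, hlin]
    linarith [hedge]
  have hφ0 : φ 0 = JJ G μ w g m := by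
    have : μ x * h x * (m x + 0 * σ) ^ α + R = 1 := by rw [zero_mul, add_zero, hone]
    simp only [hφ, this, Real.one_rpow, mul_one]
  have htend : Tendsto (slope φ 0) (𝓝[>] (0:ℝ))
      (𝓝 (JJ G μ w g m * (μ x * h x * m x ^ (α - 1) * σ))) :=
    (hasDerivAt_iff_tendsto_slope.1 hDer).mono_left
      (nhdsWithin_mono 0 fun ε hε => ne_of_gt hε)
  refine le_of_tendsto htend ?_
  filter_upwards [hEv, self_mem_nhdsWithin] with ε h1 h2
  have hε : (0:ℝ) < ε := h2
  have : slope φ 0 ε = (φ ε - φ 0) / ε := by rw [slope_def_field]; ring_nf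
  rw [this, hφ0, div_le_iff₀ hε]
  linarith

set_option maxHeartbeats 3000000 in
theorem one_yamabe_solvable {V : Type} [Fintype V] [Nonempty V]
    (G : SimpleGraph V) [DecidableRel G.Adj] (hconn : G.Connected)
    (μ : V → ℝ) (w : V → V → ℝ) (hμ : ∀ x, 0 < μ x)
    (hw : ∀ x y, G.Adj x y → 0 < w x y) (hsym : ∀ x y, G.Adj x y → w x y = w y x)
    (α : ℝ) (hα : 1 < α) (g h : V → ℝ) (hg : ∀ x, 0 < g x) (hh : ∀ x, 0 < h x) :
    ∃ u : V → ℝ, (∀ x, 0 ≤ u x) ∧ u ≠ 0 ∧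
      ∀ x, ((-(onelap G μ w u x) + g x • Sgn (u x)) ∩
            ((h x * |u x| ^ (α - 1)) • Sgn (u x))).Nonempty := by
  classical
  have hα0 : (0:ℝ) < α := lt_trans one_pos hα
  have hα1 : (0:ℝ) < α - 1 := by linarith
  have hNcont : Continuous (NN μ h α) := by
    unfold NN
    exact continuous_finset_sum _ fun z _ =>
      continuous_const.mul ((continuous_apply z).rpow_const fun u => Or.inr hα0.le)
  have hJcont : Continuous (JJ G μ w g) := by
    unfold JJ
    exact ((continuous_finset_sum _ fun z _ => continuous_finset_sum _ fun y _ =>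
      continuous_const.mul (((continuous_apply y).sub (continuous_apply z)).abs)).add
      (continuous_const.mul (continuous_finset_sum _ fun z _ =>
        continuous_const.mul (continuous_apply z))))
  set C : Set (V → ℝ) := {u | (∀ z, 0 ≤ u z) ∧ NN μ h α u = 1} with hC
  have hCclosed : IsClosed C := by
    have hCeq : C = (⋂ z, {u : V → ℝ | 0 ≤ u z}) ∩ (NN μ h α) ⁻¹' {1} := by
      ext u
      simp [hC, Set.mem_iInter]
    rw [hCeq]
    exact (isClosed_iInter fun z =>
      isClosed_le continuous_const (continuous_apply z)).inter
      (isClosed_singleton.preimage hNcont)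
  have hCsub : C ⊆ Set.univ.pi fun z => Set.Icc (0:ℝ) (max 1 (μ z * h z)⁻¹) := by
    rintro u ⟨hu0, huN⟩ z _
    refine ⟨hu0 z, ?_⟩
    have hμh : 0 < μ z * h z := mul_pos (hμ z) (hh z)
    have hterm : μ z * h z * u z ^ α ≤ 1 := by
      rw [← huN]
      exact Finset.single_le_sum (f := fun y => μ y * h y * u y ^ α)
        (fun y _ => mul_nonneg (mul_pos (hμ y) (hh y)).le (Real.rpow_nonneg (hu0 y) α))
        (Finset.mem_univ z)
    by_cases h1 : u z ≤ 1
    · exact le_trans h1 (le_max_left _ _)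
    · push_neg at h1
      have h2 : u z ≤ u z ^ α := by
        calc u z = u z ^ (1:ℝ) := (Real.rpow_one _).symm
          _ ≤ u z ^ α := Real.rpow_le_rpow_of_exponent_le h1.le hα.le
      have h3 : μ z * h z * u z ≤ 1 := le_trans (by nlinarith) hterm
      calc u z = (μ z * h z)⁻¹ * (μ z * h z * u z) := by rw [← mul_assoc, inv_mul_cancel₀ hμh.ne', one_mul]
        _ ≤ (μ z * h z)⁻¹ * 1 := mul_le_mul_of_nonneg_left h3 (inv_nonneg.2 hμh.le)
        _ ≤ max 1 (μ z * h z)⁻¹ := by rw [mul_one]; exact le_max_right _ _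
  have hCcomp : IsCompact C :=
    (isCompact_univ_pi fun z => isCompact_Icc).of_isClosed_subset hCclosed hCsub
  have hT : 0 < ∑ z, μ z * h z :=
    Finset.sum_pos (fun z _ => mul_pos (hμ z) (hh z)) Finset.univ_nonempty
  have hCne : C.Nonempty := by
    refine ⟨fun _ => (∑ z, μ z * h z) ^ (-α⁻¹),
      fun z => (Real.rpow_pos_of_pos hT _).le, ?_⟩
    unfold NN
    have hterm : ∀ z : V, μ z * h z * ((∑ z', μ z' * h z') ^ (-α⁻¹)) ^ α
        = μ z * h z * (∑ z', μ z' * h z')⁻¹ := by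
      intro z
      congr 1
      rw [← Real.rpow_mul hT.le, show -α⁻¹ * α = -1 by field_simp, Real.rpow_neg_one]
    rw [Finset.sum_congr rfl fun z _ => hterm z, ← Finset.sum_mul,
      mul_inv_cancel₀ hT.ne']
  obtain ⟨m, hmC, hmin⟩ := hCcomp.exists_isMinOn hCne hJcont.continuousOn
  obtain ⟨hm0, hmN⟩ := hmC
  have hwnn : ∀ z y, y ∈ G.neighborFinset z → 0 ≤ w z y := fun z y hy =>
    (hw z y ((SimpleGraph.mem_neighborFinset _ _ _).1 hy)).le
  have hJnonneg : ∀ v : V → ℝ, (∀ z, 0 ≤ v z) → 0 ≤ JJ G μ w g v := by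
    intro v hv
    unfold JJ
    have h1 : 0 ≤ ∑ z, ∑ y ∈ G.neighborFinset z, w z y * |v y - v z| :=
      Finset.sum_nonneg fun z _ => Finset.sum_nonneg fun y hy =>
        mul_nonneg (hwnn z y hy) (abs_nonneg _)
    have h2 : 0 ≤ ∑ z, g z * μ z * v z :=
      Finset.sum_nonneg fun z _ =>
        mul_nonneg (mul_pos (hg z) (hμ z)).le (hv z)
    linarith
  have hNnonneg : ∀ v : V → ℝ, (∀ z, 0 ≤ v z) → 0 ≤ NN μ h α v := fun v hv =>
    Finset.sum_nonneg fun z _ =>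
      mul_nonneg (mul_pos (hμ z) (hh z)).le (Real.rpow_nonneg (hv z) α)
  have hJhom : ∀ (t : ℝ), 0 ≤ t → ∀ v : V → ℝ,
      JJ G μ w g (fun z => t * v z) = t * JJ G μ w g v := by
    intro t ht v
    unfold JJ
    have e1 : (∑ z, ∑ y ∈ G.neighborFinset z, w z y * |t * v y - t * v z|)
        = t * ∑ z, ∑ y ∈ G.neighborFinset z, w z y * |v y - v z| := by
      rw [Finset.mul_sum]
      refine Finset.sum_congr rfl fun z _ => ?_
      rw [Finset.mul_sum]
      refine Finset.sum_congr rfl fun y _ => ?_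
      rw [← mul_sub, abs_mul, abs_of_nonneg ht]
      ring
    have e2 : (∑ z, g z * μ z * (t * v z)) = t * ∑ z, g z * μ z * v z := by
      rw [Finset.mul_sum]
      exact Finset.sum_congr rfl fun z _ => by ring
    rw [e1, e2]
    ring
  have hNhom : ∀ (t : ℝ), 0 ≤ t → ∀ v : V → ℝ, (∀ z, 0 ≤ v z) →
      NN μ h α (fun z => t * v z) = t ^ α * NN μ h α v := by
    intro t ht v hv
    unfold NN
    rw [Finset.mul_sum]
    refine Finset.sum_congr rfl fun z _ => ?_
    rw [Real.mul_rpow ht (hv z)]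
    ring
  have hkey : ∀ v : V → ℝ, (∀ z, 0 ≤ v z) →
      JJ G μ w g m * NN μ h α v ^ α⁻¹ ≤ JJ G μ w g v := by
    intro v hv
    rcases eq_or_lt_of_le (hNnonneg v hv) with hNv | hNv
    · rw [← hNv, Real.zero_rpow (inv_ne_zero hα0.ne'), mul_zero]
      exact hJnonneg v hv
    · set τ := (NN μ h α v) ^ (-α⁻¹) with hτ
      have hτpos : 0 < τ := Real.rpow_pos_of_pos hNv _
      have hmemC : (fun z => τ * v z) ∈ C := by
        refine ⟨fun z => mul_nonneg hτpos.le (hv z), ?_⟩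
        rw [hNhom τ hτpos.le v hv]
        have hτα : τ ^ α = (NN μ h α v)⁻¹ := by
          rw [hτ, ← Real.rpow_mul hNv.le, show -α⁻¹ * α = -1 by field_simp,
            Real.rpow_neg_one]
        rw [hτα, inv_mul_cancel₀ hNv.ne']
      have hmin' : JJ G μ w g m ≤ JJ G μ w g (fun z => τ * v z) := hmin hmemC
      rw [hJhom τ hτpos.le v] at hmin'
      have hP : (0:ℝ) < NN μ h α v ^ α⁻¹ := Real.rpow_pos_of_pos hNv _
      have hτP : τ * NN μ h α v ^ α⁻¹ = 1 := by
        rw [hτ, ← Real.rpow_add hNv, show -α⁻¹ + α⁻¹ = 0 by ring, Real.rpow_zero]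
      calc JJ G μ w g m * NN μ h α v ^ α⁻¹
          ≤ (τ * JJ G μ w g v) * NN μ h α v ^ α⁻¹ :=
            mul_le_mul_of_nonneg_right hmin' hP.le
        _ = JJ G μ w g v * (τ * NN μ h α v ^ α⁻¹) := by ring
        _ = JJ G μ w g v := by rw [hτP, mul_one]
  obtain ⟨x0, hx0⟩ : ∃ x0, 0 < m x0 := by
    by_contra hcon
    push_neg at hcon
    have hm00 : ∀ z, m z = 0 := fun z => le_antisymm (hcon z) (hm0 z)
    have hN0 : NN μ h α m = 0 := by
      unfold NN
      refine Finset.sum_eq_zero fun z _ => ?_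
      rw [hm00 z, Real.zero_rpow hα0.ne', mul_zero]
    rw [hmN] at hN0
    norm_num at hN0
  have hJm : 0 < JJ G μ w g m := by
    have h1 : 0 ≤ ∑ z, ∑ y ∈ G.neighborFinset z, w z y * |m y - m z| :=
      Finset.sum_nonneg fun z _ => Finset.sum_nonneg fun y hy =>
        mul_nonneg (hwnn z y hy) (abs_nonneg _)
    have h2 : g x0 * μ x0 * m x0 ≤ ∑ z, g z * μ z * m z :=
      Finset.single_le_sum (f := fun z => g z * μ z * m z)
        (fun z _ => mul_nonneg (mul_pos (hg z) (hμ z)).le (hm0 z)) (Finset.mem_univ x0)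
    have h3 : 0 < g x0 * μ x0 * m x0 := mul_pos (mul_pos (hg x0) (hμ x0)) hx0
    unfold JJ
    linarith
  set lam : ℝ := JJ G μ w g m / 2 with hlam
  have hlam0 : 0 < lam := by rw [hlam]; linarith
  set s : ℝ := lam ^ (α - 1)⁻¹ with hs
  have hs0 : 0 < s := Real.rpow_pos_of_pos hlam0 _
  have hsexp : s ^ (α - 1) = lam := by
    rw [hs, ← Real.rpow_mul hlam0.le, inv_mul_cancel₀ hα1.ne', Real.rpow_one]
  refine ⟨fun z => s * m z, fun z => mul_nonneg hs0.le (hm0 z), ?_, ?_⟩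
  · intro hcon
    have h0 : s * m x0 = 0 := congrFun hcon x0
    nlinarith
  intro x
  set Dlt : ℝ := ∑ y ∈ G.neighborFinset x, (if m y < m x then w x y else 0) with hDlt
  set Dgt : ℝ := ∑ y ∈ G.neighborFinset x, (if m x < m y then w x y else 0) with hDgt
  set Deq : ℝ := ∑ y ∈ G.neighborFinset x, (if m y = m x then w x y else 0) with hDeq
  have hDltnn : 0 ≤ Dlt := Finset.sum_nonneg fun y hy => by
    split_ifs
    exacts [hwnn x y hy, le_refl 0]
  have hDgtnn : 0 ≤ Dgt := Finset.sum_nonneg fun y hy => by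
    split_ifs
    exacts [hwnn x y hy, le_refl 0]
  have hDeqnn : 0 ≤ Deq := Finset.sum_nonneg fun y hy => by
    split_ifs
    exacts [hwnn x y hy, le_refl 0]
  have P1 : JJ G μ w g m * (μ x * h x * m x ^ (α - 1))
      ≤ 2 * ((Dlt + Deq - Dgt) + g x * μ x) := by
    have hco := core G μ w g h (fun a b hab => (hw a b hab).le) hsym α hα m hm0 hmN hkey
      x 1 (Or.inl rfl) (by norm_num)
    have hsumeq : (∑ y ∈ G.neighborFinset x,
        w x y * (if 0 < (1:ℝ) * (m y - m x) then (-1:ℝ) else 1)) = Dlt + Deq - Dgt := by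
      rw [hDlt, hDgt, hDeq, ← Finset.sum_add_distrib, ← Finset.sum_sub_distrib]
      refine Finset.sum_congr rfl fun y _ => ?_
      rcases lt_trichotomy (m y) (m x) with hc | hc | hc
      · rw [if_neg (by rw [one_mul]; push_neg; linarith), if_pos hc, if_neg (ne_of_lt hc),
          if_neg (not_lt.2 hc.le)]
        ring
      · rw [if_neg (by rw [one_mul, hc]; simp), if_neg (by rw [hc]; exact lt_irrefl _),
          if_pos hc, if_neg (by rw [hc]; exact lt_irrefl _)]
        ring
      · rw [if_pos (by rw [one_mul]; linarith), if_neg (not_lt.2 hc.le),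
          if_neg (ne_of_gt hc), if_pos hc]
        ring
    rw [hsumeq] at hco
    calc JJ G μ w g m * (μ x * h x * m x ^ (α - 1))
        = JJ G μ w g m * (μ x * h x * m x ^ (α - 1) * 1) := by ring
      _ ≤ 2 * ((Dlt + Deq - Dgt) + 1 * (g x * μ x)) := hco
      _ = 2 * ((Dlt + Deq - Dgt) + g x * μ x) := by ring
  rcases (hm0 x).eq_or_lt with hxe | hxp
  · -- case m x = 0
    have hmx : m x = 0 := hxe.symm
    have hux : s * m x = 0 := by rw [hmx, mul_zero]
    have hDlt0 : Dlt = 0 := by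
      rw [hDlt]
      refine Finset.sum_eq_zero fun y _ => ?_
      rw [if_neg (not_lt.2 (by rw [hmx]; exact hm0 y))]
    have hP1' : Dgt ≤ Deq + g x * μ x := by
      have hz : m x ^ (α - 1) = 0 := by rw [hmx, Real.zero_rpow hα1.ne']
      rw [hz] at P1
      have : JJ G μ w g m * (μ x * h x * 0) = 0 := by ring
      rw [this] at P1
      linarith [hDlt0]
    set r : ℝ := Dgt / (Deq + g x * μ x) with hr
    have hden : 0 < Deq + g x * μ x := by
      have := mul_pos (hg x) (hμ x)
      linarith
    have hr0 : 0 ≤ r := div_nonneg hDgtnn hden.le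
    have hr1 : r ≤ 1 := (div_le_one hden).2 hP1'
    have hzmem : ∀ y ∈ G.neighborFinset x,
        (if m y = m x then -r else 1) ∈ Sgn (s * m y - s * m x) := by
      intro y _
      by_cases hey : m y = m x
      · rw [if_pos hey, hey, sub_self, Sgn_of_zero]
        exact ⟨by linarith, by linarith⟩
      · have hgty : m x < m y := lt_of_le_of_ne (by rw [hmx]; exact hm0 y) (Ne.symm hey)
        rw [if_neg hey, Sgn_of_pos (by nlinarith)]
        rfl
    set b0 : ℝ := (μ x)⁻¹ * ∑ y ∈ G.neighborFinset x,
        w x y * (if m y = m x then -r else 1) with hb0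
    have honemem : b0 ∈ onelap G μ w (fun z => s * m z) x := by
      show b0 ∈ (μ x)⁻¹ • ∑ y ∈ G.neighborFinset x,
        w x y • Sgn ((fun z => s * m z) y - (fun z => s * m z) x)
      have hin := mem_sum_sets (G.neighborFinset x)
        (fun y => w x y • Sgn ((fun z => s * m z) y - (fun z => s * m z) x))
        (fun y => w x y * (if m y = m x then -r else 1))
        (fun y hy => by
          simpa [smul_eq_mul] using Set.smul_mem_smul_set (a := w x y) (hzmem y hy))
      simpa [smul_eq_mul, hb0] using Set.smul_mem_smul_set (a := (μ x)⁻¹) hin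
    have hsumz : ∑ y ∈ G.neighborFinset x, w x y * (if m y = m x then -r else 1)
        = (Dgt + Dlt) - r * Deq := by
      rw [hDgt, hDlt, hDeq, ← Finset.sum_add_distrib, Finset.mul_sum, ← Finset.sum_sub_distrib]
      refine Finset.sum_congr rfl fun y _ => ?_
      rcases lt_trichotomy (m y) (m x) with hc | hc | hc
      · rw [if_neg (ne_of_lt hc), if_neg (not_lt.2 hc.le), if_pos hc, if_neg (ne_of_lt hc)]
        ring
      · rw [if_pos hc, if_neg (by rw [hc]; exact lt_irrefl _),
          if_neg (by rw [hc]; exact lt_irrefl _), if_pos hc]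
        ring
      · rw [if_neg (ne_of_gt hc), if_pos hc, if_neg (not_lt.2 hc.le), if_neg (ne_of_gt hc)]
        ring
    have h3 : -b0 + g x * r = 0 := by
      rw [hb0, hsumz, hDlt0]
      have hreq : r * (Deq + g x * μ x) = Dgt := by
        rw [hr]
        field_simp
      have hμx := (hμ x).ne'
      field_simp
      nlinarith [hreq]
    refine ⟨0, ?_, ?_⟩
    · have h1 : -b0 ∈ -(onelap G μ w (fun z => s * m z) x) := Set.neg_mem_neg.2 honemem
      have h2 : g x * r ∈ g x • Sgn ((fun z => s * m z) x) := by
        show g x * r ∈ g x • Sgn (s * m x)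
        rw [hux, Sgn_of_zero]
        simpa [smul_eq_mul] using Set.smul_mem_smul_set (a := g x)
          (show r ∈ Set.Icc (-1:ℝ) 1 from ⟨by linarith, hr1⟩)
      have := Set.add_mem_add h1 h2
      rwa [h3] at this
    · show (0:ℝ) ∈ (h x * |s * m x| ^ (α - 1)) • Sgn (s * m x)
      rw [hux, abs_zero, Real.zero_rpow hα1.ne', mul_zero, Sgn_of_zero]
      have h0mem : (0:ℝ) ∈ Set.Icc (-1:ℝ) 1 := ⟨by norm_num, by norm_num⟩
      simpa [smul_eq_mul] using Set.smul_mem_smul_set (a := (0:ℝ)) h0mem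
  · -- case 0 < m x
    have P2 : -(JJ G μ w g m * (μ x * h x * m x ^ (α - 1)))
        ≤ 2 * ((Dgt + Deq - Dlt) - g x * μ x) := by
      have hco := core G μ w g h (fun a b hab => (hw a b hab).le) hsym α hα m hm0 hmN hkey
        x (-1) (Or.inr rfl) (fun _ => hxp)
      have hsumeq : (∑ y ∈ G.neighborFinset x,
          w x y * (if 0 < (-1:ℝ) * (m y - m x) then (-1:ℝ) else 1)) = Dgt + Deq - Dlt := by
        rw [hDlt, hDgt, hDeq, ← Finset.sum_add_distrib, ← Finset.sum_sub_distrib]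
        refine Finset.sum_congr rfl fun y _ => ?_
        rcases lt_trichotomy (m y) (m x) with hc | hc | hc
        · rw [if_pos (by nlinarith), if_neg (not_lt.2 hc.le), if_neg (ne_of_lt hc), if_pos hc]
          ring
        · rw [if_neg (by rw [hc]; simp), if_neg (by rw [hc]; exact lt_irrefl _),
            if_pos hc, if_neg (by rw [hc]; exact lt_irrefl _)]
          ring
        · rw [if_neg (by push_neg; nlinarith), if_pos hc, if_neg (ne_of_gt hc),
            if_neg (not_lt.2 hc.le)]
          ring
      rw [hsumeq] at hco
      calc -(JJ G μ w g m * (μ x * h x * m x ^ (α - 1)))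
          = JJ G μ w g m * (μ x * h x * m x ^ (α - 1) * (-1)) := by ring
        _ ≤ 2 * ((Dgt + Deq - Dlt) + (-1) * (g x * μ x)) := hco
        _ = 2 * ((Dgt + Deq - Dlt) - g x * μ x) := by ring
    have hux : 0 < s * m x := mul_pos hs0 hxp
    set κ : ℝ := h x * |s * m x| ^ (α - 1) with hκ
    have hκval : κ = lam * (h x * m x ^ (α - 1)) := by
      rw [hκ, abs_of_pos hux, Real.mul_rpow hs0.le (hm0 x), hsexp]
      ring
    set q : ℝ := μ x * (κ - g x) - (Dlt - Dgt) with hq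
    have hqle : |q| ≤ Deq := by
      rw [abs_le]
      constructor
      · rw [hq, hκval, hlam]
        have hμx := hμ x
        nlinarith [P2]
      · rw [hq, hκval, hlam]
        nlinarith [P1]
    set t : ℝ := if Deq = 0 then (0:ℝ) else q / Deq with ht
    have htq : t * Deq = q := by
      by_cases hD0 : Deq = 0
      · rw [ht, if_pos hD0, hD0, mul_zero]
        have hq0 : |q| ≤ 0 := hD0 ▸ hqle
        have := abs_nonneg q
        have : |q| = 0 := le_antisymm hq0 this
        rw [abs_eq_zero] at this
        rw [this]
      · rw [ht, if_neg hD0]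
        field_simp
    have ht1 : |t| ≤ 1 := by
      by_cases hD0 : Deq = 0
      · rw [ht, if_pos hD0]
        norm_num
      · have hDpos : 0 < Deq := lt_of_le_of_ne hDeqnn (Ne.symm hD0)
        rw [ht, if_neg hD0, abs_div, abs_of_pos hDpos, div_le_one hDpos]
        exact hqle
    have ht1' := abs_le.1 ht1
    have hzmem : ∀ y ∈ G.neighborFinset x,
        (if m y = m x then -t else if m y < m x then (-1:ℝ) else 1)
          ∈ Sgn (s * m y - s * m x) := by
      intro y _
      rcases lt_trichotomy (m y) (m x) with hc | hc | hc
      · rw [if_neg (ne_of_lt hc), if_pos hc, Sgn_of_neg (by nlinarith)]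
        rfl
      · rw [if_pos hc, hc, sub_self, Sgn_of_zero]
        exact ⟨by linarith [ht1'.2], by linarith [ht1'.1]⟩
      · rw [if_neg (ne_of_gt hc), if_neg (not_lt.2 hc.le), Sgn_of_pos (by nlinarith)]
        rfl
    set b0 : ℝ := (μ x)⁻¹ * ∑ y ∈ G.neighborFinset x,
        w x y * (if m y = m x then -t else if m y < m x then (-1:ℝ) else 1) with hb0
    have honemem : b0 ∈ onelap G μ w (fun z => s * m z) x := by
      show b0 ∈ (μ x)⁻¹ • ∑ y ∈ G.neighborFinset x,
        w x y • Sgn ((fun z => s * m z) y - (fun z => s * m z) x)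
      have hin := mem_sum_sets (G.neighborFinset x)
        (fun y => w x y • Sgn ((fun z => s * m z) y - (fun z => s * m z) x))
        (fun y => w x y * (if m y = m x then -t else if m y < m x then (-1:ℝ) else 1))
        (fun y hy => by
          simpa [smul_eq_mul] using Set.smul_mem_smul_set (a := w x y) (hzmem y hy))
      simpa [smul_eq_mul, hb0] using Set.smul_mem_smul_set (a := (μ x)⁻¹) hin
    have hsumz : ∑ y ∈ G.neighborFinset x,
        w x y * (if m y = m x then -t else if m y < m x then (-1:ℝ) else 1)
        = Dgt - Dlt - t * Deq := by
      rw [hDgt, hDlt, hDeq, Finset.mul_sum, ← Finset.sum_sub_distrib, ← Finset.sum_sub_distrib]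
      refine Finset.sum_congr rfl fun y _ => ?_
      rcases lt_trichotomy (m y) (m x) with hc | hc | hc
      · rw [if_neg (ne_of_lt hc), if_pos hc, if_neg (not_lt.2 hc.le), if_pos hc,
          if_neg (ne_of_lt hc)]
        ring
      · rw [if_pos hc, if_neg (by rw [hc]; exact lt_irrefl _),
          if_neg (by rw [hc]; exact lt_irrefl _), if_pos hc]
        ring
      · rw [if_neg (ne_of_gt hc), if_neg (not_lt.2 hc.le), if_pos hc,
          if_neg (not_lt.2 hc.le), if_neg (ne_of_gt hc)]
        ring
    have hSgnux : Sgn (s * m x) = {1} := Sgn_of_pos hux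
    have h3 : -b0 + g x * 1 = κ := by
      rw [hb0, hsumz, htq, hq]
      have hμx := (hμ x).ne'
      field_simp
      ring
    refine ⟨κ, ?_, ?_⟩
    · have h1 : -b0 ∈ -(onelap G μ w (fun z => s * m z) x) := Set.neg_mem_neg.2 honemem
      have h2 : g x * 1 ∈ g x • Sgn ((fun z => s * m z) x) := by
        show g x * 1 ∈ g x • Sgn (s * m x)
        rw [hSgnux]
        simpa [smul_eq_mul] using Set.smul_mem_smul_set (a := g x)
          (Set.mem_singleton (1:ℝ))
      have := Set.add_mem_add h1 h2
      rwa [h3] at this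
    · show κ ∈ (h x * |s * m x| ^ (α - 1)) • Sgn (s * m x)
      rw [hSgnux, ← hκ]
      have := Set.smul_mem_smul_set (a := κ) (Set.mem_singleton (1:ℝ))
      simpa [smul_eq_mul] using this
end
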